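/- arXiv:1806.04717 — 3 statements merged into one kernel-verified Lean document; each statement's English description precedes it below -/
import Mathlib

section
/- Let the replacement rule represent neutral drift and fix a mutation probability u > 0. Then for every state x ∈ {0,1}^G, the stationary probability π_MSS(x) of the evolutionary Markov chain with mutational bias ν equals the stationary probability π_MSS(x̄) of the evolutionary Markov chain with mutational bias 1 − ν, where x̄_g = 1 − x_g for all g ∈ G. -/
/-!
Common formal scaffold for "A mathematical formalism for natural selection
with arbitrary spatial and genetic structure" (Allen & McAvoy).

A population is a finite nonempty set `G` of genetic sites.  A state is a
subset of `G` (the set of sites occupied by allele `A`); `∅` is the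
monoallelic state `a` and `Finset.univ` is the monoallelic state `A`.
A replacement event is a pair `(R, α)` with `R ⊆ G` and `α : R → G`.
-/

open Filter Topology Set

namespace NatSel

variable (G : Type) [Fintype G] [DecidableEq G]

/-- A state of the population: the set of sites holding allele `A`. -/
abbrev PopState := Finset G

/-- A replacement event `(R, α)`: the replaced set `R ⊆ G` together with the
parentage map `α : R → G`. -/
abbrev RepEvent := Σ R : Finset G, (↥R → G)

variable {G}

/-- `x_g ∈ {0,1}` as a real number. -/
def xg (x : PopState G) (g : G) : ℝ := if g ∈ x then 1 else 0

/-- `α̃` : agrees with `α` on `R`, is the identity off `R`. -/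
def tildeMap (e : RepEvent G) (g : G) : G :=
  if h : g ∈ e.1 then e.2 ⟨g, h⟩ else g

/-- `p` is a replacement rule: for each state it gives a probability
distribution over replacement events. -/
def IsRule (p : PopState G → RepEvent G → ℝ) : Prop :=
  (∀ x e, 0 ≤ p x e) ∧ ∀ x, ∑ e : RepEvent G, p x e = 1

/-- The Fixation Axiom. -/
def FixationAxiom (p : PopState G → RepEvent G → ℝ) : Prop :=
  ∃ g : G, ∃ m : ℕ, 0 < m ∧ ∃ ev : Fin m → RepEvent G,
    (∀ k, ∀ x : PopState G, 0 < p x (ev k)) ∧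
    (∃ k, g ∈ (ev k).1) ∧
    (∀ h : G, (List.ofFn fun k => tildeMap (ev k)).foldr (· ∘ ·) id h = g)

/-- `e_{gh}(x)`: marginal probability that the allele in site `h` is replaced
by a copy of the allele in site `g`, in state `x`. -/
def eMarg (p : PopState G → RepEvent G → ℝ) (g h : G) (x : PopState G) : ℝ :=
  ∑ e : RepEvent G, if hh : h ∈ e.1 then (if e.2 ⟨h, hh⟩ = g then p x e else 0) else 0

/-- `b_g(x)`: expected offspring number (birth rate) of site `g` in state `x`. -/
def bRate (p : PopState G → RepEvent G → ℝ) (g : G) (x : PopState G) : ℝ :=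
  ∑ h, eMarg p g h x

/-- `d_g(x)`: death probability of site `g` in state `x`. -/
def dProb (p : PopState G → RepEvent G → ℝ) (g : G) (x : PopState G) : ℝ :=
  ∑ h, eMarg p h g x

/-- `b(x)`: total expected offspring number in state `x`. -/
def bTot (p : PopState G → RepEvent G → ℝ) (x : PopState G) : ℝ :=
  ∑ g, bRate p g x

/-- Probability that a replaced site whose parent holds allele `parent`
(`true` = `A`) acquires allele `child`, with mutation probability `u` and
mutational bias `ν`. -/
def siteProb (u ν : ℝ) (parent child : Bool) : ℝ :=
  (if child = parent then 1 - u else 0) + (if child = true then u * ν else u * (1 - ν))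

/-- One-step transition probability `P_{x → y}` of the evolutionary Markov
chain with replacement rule `p`, mutation probability `u`, mutational bias `ν`. -/
def step (p : PopState G → RepEvent G → ℝ) (u ν : ℝ) (x y : PopState G) : ℝ :=
  ∑ e : RepEvent G, p x e *
    (if y \ e.1 = x \ e.1 then
       ∏ g ∈ e.1.attach, siteProb u ν (decide (e.2 g ∈ x)) (decide (g.1 ∈ y))
     else 0)

/-- `t`-step transition probabilities of a kernel `P`. -/
def iterKer (P : PopState G → PopState G → ℝ) : ℕ → PopState G → PopState G → ℝ
  | 0, x, y => if x = y then 1 else 0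
  | (t + 1), x, y => ∑ z : PopState G, iterKer P t x z * P z y

/-- The state obtained from `x` by the (mutation-free) replacement event `e`. -/
def applyEvent (e : RepEvent G) (x : PopState G) : PopState G :=
  Finset.univ.filter fun g => tildeMap e g ∈ x

/-- One-step transition probability of the mutation-free (`u = 0`) chain. -/
def step0 (p : PopState G → RepEvent G → ℝ) (x y : PopState G) : ℝ :=
  ∑ e : RepEvent G, if y = applyEvent e x then p x e else 0

/-- The mutant appearance distribution `μ_A`: probability `d_g(a)/b(a)` on the
state `{g}`, for each `g ∈ G`. -/
noncomputable def muA (p : PopState G → RepEvent G → ℝ) (x : PopState G) : ℝ :=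
  ∑ g : G, if x = {g} then dProb p g ∅ / bTot p ∅ else 0

/-- The mutant appearance distribution `μ_a`: probability `d_g(A)/b(A)` on the
state `G \ {g}`, for each `g ∈ G`. -/
noncomputable def mua (p : PopState G → RepEvent G → ℝ) (x : PopState G) : ℝ :=
  ∑ g : G, if x = Finset.univ \ {g} then dProb p g Finset.univ / bTot p Finset.univ else 0

/-- Fixation probability `ρ_A` (computed at `u = 0`). -/
noncomputable def rhoA (p : PopState G → RepEvent G → ℝ) (ν : ℝ) : ℝ :=
  ∑ x : PopState G, muA p x *
    limUnder atTop (fun t => iterKer (step p 0 ν) t x Finset.univ)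

/-- Fixation probability `ρ_a` (computed at `u = 0`). -/
noncomputable def rhoa (p : PopState G → RepEvent G → ℝ) (ν : ℝ) : ℝ :=
  ∑ x : PopState G, mua p x *
    limUnder atTop (fun t => iterKer (step p 0 ν) t x ∅)

/-- Frequency `x = (1/n) Σ_g x_g` of allele `A`. -/
noncomputable def freq (x : PopState G) : ℝ := (x.card : ℝ) / (Fintype.card G : ℝ)

/-- Expected change due to selection, `Δ_sel(x) = Σ_g x_g (b_g(x) − d_g(x))`. -/
def deltaSel (p : PopState G → RepEvent G → ℝ) (x : PopState G) : ℝ :=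
  ∑ g, xg x g * (bRate p g x - dProb p g x)

/-- The finset of states other than the monoallelic states `a = ∅`, `A = univ`. -/
def offStates (G : Type) [Fintype G] [DecidableEq G] : Finset (PopState G) :=
  Finset.univ.filter fun x : PopState G => x ≠ ∅ ∧ x ≠ Finset.univ

/-- Assumption 1: consistency of monoallelic states. -/
def ConsistentMono (p : PopState G → RepEvent G → ℝ) : Prop :=
  ∀ e : RepEvent G, p ∅ e = p Finset.univ e

/-- A replacement rule represents neutral drift: probabilities are
state-independent. -/
def NeutralDrift (p : PopState G → RepEvent G → ℝ) : Prop :=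
  ∀ x e, p x e = p ∅ e

/-- Reproductive values: `{v_g}` solves `d°_g v_g = Σ_h e°_{gh} v_h` (with the
monoallelic-state quantities) together with `Σ_g v_g = n`. -/
def IsRepVal (p : PopState G → RepEvent G → ℝ) (v : G → ℝ) : Prop :=
  (∀ g, dProb p g ∅ * v g = ∑ h, eMarg p g h ∅ * v h) ∧
    ∑ g, v g = (Fintype.card G : ℝ)

/-- RV-weighted birth rate `b̂_g(x) = Σ_h e_{gh}(x) v_h`. -/
def bHat (p : PopState G → RepEvent G → ℝ) (v : G → ℝ) (g : G) (x : PopState G) : ℝ :=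
  ∑ h, eMarg p g h x * v h

/-- RV-weighted death rate `d̂_g(x) = v_g d_g(x)`. -/
def dHat (p : PopState G → RepEvent G → ℝ) (v : G → ℝ) (g : G) (x : PopState G) : ℝ :=
  v g * dProb p g x

/-- Total RV-weighted birth rate `b̂(x)`. -/
def bHatTot (p : PopState G → RepEvent G → ℝ) (v : G → ℝ) (x : PopState G) : ℝ :=
  ∑ g, bHat p v g x

/-- RV-weighted change due to selection `Δ̂_sel(x) = Σ_g x_g (b̂_g(x) − d̂_g(x))`. -/
def deltaHatSel (p : PopState G → RepEvent G → ℝ) (v : G → ℝ) (x : PopState G) : ℝ :=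
  ∑ g, xg x g * (bHat p v g x - dHat p v g x)

/-- Fitness `w_g(x) = v_g − d̂_g(x) + b̂_g(x)`. -/
def fitness (p : PopState G → RepEvent G → ℝ) (v : G → ℝ) (g : G) (x : PopState G) : ℝ :=
  v g - dHat p v g x + bHat p v g x

/-- RV-weighted frequency `x̂ = (1/n) Σ_g v_g x_g`. -/
noncomputable def freqHat (v : G → ℝ) (x : PopState G) : ℝ :=
  (∑ g, v g * xg x g) / (Fintype.card G : ℝ)

/-- `{π u}_{0<u≤1}` is, for each mutation probability `0 < u ≤ 1`, a stationary
distribution of the evolutionary Markov chain (i.e. the mutation-selection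
stationary distribution, which is unique by ergodicity). -/
def IsMSSFamily (p : PopState G → RepEvent G → ℝ) (ν : ℝ)
    (π : ℝ → PopState G → ℝ) : Prop :=
  ∀ u, u ∈ Set.Ioc (0 : ℝ) 1 →
    (∀ x, 0 ≤ π u x) ∧ (∑ x : PopState G, π u x = 1) ∧
      ∀ y, π u y = ∑ x : PopState G, π u x * step p u ν x y

/-- `πR` is the rare-mutation conditional (RMC) distribution associated with
the MSS family `π`: for each non-monoallelic state `x`,
`πR x = lim_{u→0} π_MSS(x)/(1 − π_MSS(A) − π_MSS(a))`. -/
def IsRMC (π : ℝ → PopState G → ℝ) (πR : PopState G → ℝ) : Prop :=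
  ∀ x ∈ offStates G,
    Tendsto (fun u => π u x / (1 - π u Finset.univ - π u ∅))
      (nhdsWithin 0 (Set.Ioi 0)) (nhds (πR x))

end NatSel

open NatSel

section Aux

variable {G : Type} [Fintype G] [DecidableEq G]

open Finset in
lemma prod_ite_mem_subset {α : Type*} [DecidableEq α] (s T : Finset α) (hT : T ⊆ s)
    (f g : α → ℝ) :
    ∏ i ∈ s, (if i ∈ T then f i else g i) = (∏ i ∈ T, f i) * ∏ i ∈ s \ T, g i := by
  have := Finset.prod_piecewise s T f g
  simp only [Finset.piecewise] at this
  rw [this, Finset.inter_eq_right.mpr hT]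

open Finset in
lemma sum_states_prod (R x : Finset G) (f : ↥R → Bool → ℝ) :
    (∑ y : Finset G, if y \ R = x \ R then ∏ g ∈ R.attach, f g (decide (g.1 ∈ y)) else 0)
      = ∏ g ∈ R.attach, (f g true + f g false) := by
  rw [← Finset.sum_filter, Finset.prod_add]
  refine Finset.sum_bij' (fun y _ => R.attach.filter (fun g => g.1 ∈ y))
    (fun T _ => x \ R ∪ T.image Subtype.val) ?_ ?_ ?_ ?_ ?_
  · intro y hy
    simp [Finset.mem_powerset, Finset.filter_subset]
  · intro T hT
    simp only [Finset.mem_filter, Finset.mem_univ, true_and]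
    ext g
    simp only [Finset.mem_sdiff, Finset.mem_union, Finset.mem_image, Finset.mem_attach]
    constructor
    · rintro ⟨(⟨hx, hR⟩ | ⟨a, _, rfl⟩), hR'⟩
      · exact ⟨hx, hR⟩
      · exact absurd a.2 hR'
    · rintro ⟨hx, hR⟩; exact ⟨Or.inl ⟨hx, hR⟩, hR⟩
  · intro y hy
    simp only [Finset.mem_filter, Finset.mem_univ, true_and] at hy
    ext g
    have := Finset.ext_iff.mp hy g
    simp only [Finset.mem_sdiff] at this
    by_cases hR : g ∈ R <;>
      simp only [Finset.mem_union, Finset.mem_sdiff, Finset.mem_image, Finset.mem_filter,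
        Finset.mem_attach, true_and] <;> constructor
    · rintro (⟨hx, hR'⟩ | ⟨a, ha, rfl⟩)
      · exact absurd hR hR'
      · exact ha
    · intro hg; exact Or.inr ⟨⟨g, hR⟩, hg, rfl⟩
    · rintro (⟨hx, hR'⟩ | ⟨a, ha, rfl⟩)
      · exact (this.mpr ⟨hx, hR'⟩).1
      · exact absurd a.2 hR
    · intro hg; exact Or.inl ⟨(this.mp ⟨hg, hR⟩).1, hR⟩
  · intro T hT
    simp only [Finset.mem_powerset] at hT
    ext g
    simp only [Finset.mem_filter, Finset.mem_attach, true_and, Finset.mem_union,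
      Finset.mem_sdiff, Finset.mem_image]
    constructor
    · rintro (⟨hx, hR⟩ | ⟨a, ha, hav⟩)
      · exact absurd g.2 hR
      · rwa [← Subtype.ext hav.symm] at ha
    · intro hg; exact Or.inr ⟨g, hg, rfl⟩
  · intro y hy
    simp only [Finset.mem_filter, Finset.mem_univ, true_and] at hy
    rw [← prod_ite_mem_subset R.attach (R.attach.filter (fun g => g.1 ∈ y))
      (Finset.filter_subset _ _) (fun g => f g true) (fun g => f g false)]
    · refine Finset.prod_congr rfl fun g hg => ?_
      by_cases h : g.1 ∈ y <;> simp [h]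

variable (u ν : ℝ)

lemma siteProb_nonneg (hu : 0 ≤ u) (hu1 : u ≤ 1) (hν : 0 ≤ ν) (hν1 : ν ≤ 1)
    (a b : Bool) : 0 ≤ siteProb u ν a b := by
  cases a <;> cases b <;> simp [siteProb] <;> nlinarith

lemma siteProb_sum (a : Bool) : siteProb u ν a true + siteProb u ν a false = 1 := by
  cases a <;> simp [siteProb] <;> ring

lemma siteProb_compl (a b : Bool) : siteProb u (1 - ν) (!a) (!b) = siteProb u ν a b := by
  cases a <;> cases b <;> simp [siteProb] <;> ring

lemma siteProb_true_ge (hu1 : u ≤ 1) (hν : 0 ≤ ν) (a : Bool) :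
    u * ν ≤ siteProb u ν a true := by
  cases a <;> simp [siteProb] <;> nlinarith

variable {p : PopState G → RepEvent G → ℝ}

lemma step_nonneg (hp : ∀ x e, 0 ≤ p x e) (hu : 0 ≤ u) (hu1 : u ≤ 1)
    (hν : 0 ≤ ν) (hν1 : ν ≤ 1) (x y : PopState G) : 0 ≤ step p u ν x y := by
  refine Finset.sum_nonneg fun e _ => mul_nonneg (hp x e) ?_
  split
  · exact Finset.prod_nonneg fun g _ => siteProb_nonneg u ν hu hu1 hν hν1 _ _
  · exact le_refl 0

lemma step_row_sum (hp : ∀ x, ∑ e : RepEvent G, p x e = 1) (x : PopState G) :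
    ∑ y : PopState G, step p u ν x y = 1 := by
  unfold step
  rw [Finset.sum_comm]
  calc ∑ e : RepEvent G, ∑ y : PopState G, p x e *
        (if y \ e.1 = x \ e.1 then
          ∏ g ∈ e.1.attach, siteProb u ν (decide (e.2 g ∈ x)) (decide (g.1 ∈ y)) else 0)
      = ∑ e : RepEvent G, p x e := by
        refine Finset.sum_congr rfl fun e _ => ?_
        rw [← Finset.mul_sum,
          sum_states_prod e.1 x (fun g b => siteProb u ν (decide (e.2 g ∈ x)) b)]
        rw [Finset.prod_congr rfl fun g _ => siteProb_sum u ν _, Finset.prod_const_one,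
          mul_one]
    _ = 1 := hp x

lemma step_compl (hp : ∀ x e, p x e = p ∅ e) (x y : PopState G) :
    step p u (1 - ν) xᶜ yᶜ = step p u ν x y := by
  unfold step
  refine Finset.sum_congr rfl fun e _ => ?_
  rw [hp xᶜ e, hp x e]
  congr 1
  have hcond : (yᶜ \ e.1 = xᶜ \ e.1) ↔ (y \ e.1 = x \ e.1) := by
    simp only [Finset.ext_iff, Finset.mem_sdiff, Finset.mem_compl]
    constructor <;> intro h g <;> have := h g <;> tauto
  by_cases hc : y \ e.1 = x \ e.1
  · rw [if_pos (hcond.mpr hc), if_pos hc]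
    refine Finset.prod_congr rfl fun g _ => ?_
    have h1 : decide (e.2 g ∈ xᶜ) = !decide (e.2 g ∈ x) := by
      by_cases h : e.2 g ∈ x <;> simp [h]
    have h2 : decide (g.1 ∈ yᶜ) = !decide (g.1 ∈ y) := by
      by_cases h : g.1 ∈ y <;> simp [h]
    rw [h1, h2, siteProb_compl]
  · rw [if_neg (fun h => hc (hcond.mp h)), if_neg hc]

end Aux

section Aux2

variable {G : Type} [Fintype G] [DecidableEq G]

lemma iterKer_nonneg {P : PopState G → PopState G → ℝ} (hP : ∀ x y, 0 ≤ P x y) :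
    ∀ t x y, 0 ≤ iterKer P t x y := by
  intro t
  induction t with
  | zero => intro x y; unfold iterKer; split <;> norm_num
  | succ t ih =>
    intro x y
    exact Finset.sum_nonneg fun z _ => mul_nonneg (ih x z) (hP z y)

lemma iterKer_succ_left (P : PopState G → PopState G → ℝ) :
    ∀ t x y, iterKer P (t + 1) x y = ∑ z : PopState G, P x z * iterKer P t z y := by
  intro t
  induction t with
  | zero =>
    intro x y
    show (∑ z : PopState G, iterKer P 0 x z * P z y) = _
    simp [iterKer]
  | succ t ih =>
    intro x y
    show (∑ z : PopState G, iterKer P (t+1) x z * P z y) = _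
    calc (∑ z : PopState G, iterKer P (t+1) x z * P z y)
        = ∑ z : PopState G, (∑ w : PopState G, P x w * iterKer P t w z) * P z y := by
          refine Finset.sum_congr rfl fun z _ => ?_; rw [ih]
      _ = ∑ w : PopState G, P x w * ∑ z : PopState G, iterKer P t w z * P z y := by
          simp only [Finset.sum_mul, Finset.mul_sum]
          rw [Finset.sum_comm]
          exact Finset.sum_congr rfl fun w _ => Finset.sum_congr rfl fun z _ => by ring
      _ = _ := rfl

lemma iterKer_row_sum {P : PopState G → PopState G → ℝ}
    (hP : ∀ x, ∑ y : PopState G, P x y = 1) :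
    ∀ t x, ∑ y : PopState G, iterKer P t x y = 1 := by
  intro t
  induction t with
  | zero => intro x; simp [iterKer]
  | succ t ih =>
    intro x
    show (∑ y : PopState G, ∑ z : PopState G, iterKer P t x z * P z y) = 1
    rw [Finset.sum_comm]
    calc (∑ z : PopState G, ∑ y : PopState G, iterKer P t x z * P z y)
        = ∑ z : PopState G, iterKer P t x z := by
          refine Finset.sum_congr rfl fun z _ => ?_
          rw [← Finset.mul_sum, hP z, mul_one]
      _ = 1 := ih x

lemma iterKer_stationary {P : PopState G → PopState G → ℝ} {π : PopState G → ℝ}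
    (hπ : ∀ y, π y = ∑ x : PopState G, π x * P x y) :
    ∀ t y, π y = ∑ x : PopState G, π x * iterKer P t x y := by
  intro t
  induction t with
  | zero => intro y; simp [iterKer, Finset.sum_ite_eq', Finset.mem_univ]
  | succ t ih =>
    intro y
    show π y = ∑ x : PopState G, π x * ∑ z : PopState G, iterKer P t x z * P z y
    calc π y = ∑ z : PopState G, π z * P z y := hπ y
      _ = ∑ z : PopState G, (∑ x : PopState G, π x * iterKer P t x z) * P z y := by
          refine Finset.sum_congr rfl fun z _ => ?_; rw [← ih]
      _ = _ := by
        simp only [Finset.sum_mul, Finset.mul_sum]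
        rw [Finset.sum_comm]
        exact Finset.sum_congr rfl fun x _ => Finset.sum_congr rfl fun z _ => by ring

variable {p : PopState G → RepEvent G → ℝ} {u ν : ℝ}

lemma step_lower (hp : ∀ x e, 0 ≤ p x e) (hu : 0 ≤ u) (hu1 : u ≤ 1)
    (hν : 0 ≤ ν) (hν1 : ν ≤ 1) (x : PopState G) (e : RepEvent G) :
    p x e * (u * ν) ^ e.1.card ≤ step p u ν x (x ∪ e.1) := by
  unfold step
  have hterm : ∀ e' : RepEvent G, e' ∈ (Finset.univ : Finset (RepEvent G)) →
      0 ≤ p x e' * (if (x ∪ e.1) \ e'.1 = x \ e'.1 then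
        ∏ g ∈ e'.1.attach, siteProb u ν (decide (e'.2 g ∈ x)) (decide (g.1 ∈ x ∪ e.1)) else 0) := by
    intro e' _
    refine mul_nonneg (hp x e') ?_
    split
    · exact Finset.prod_nonneg fun g _ => siteProb_nonneg u ν hu hu1 hν hν1 _ _
    · exact le_refl 0
  refine le_trans ?_ (Finset.single_le_sum hterm (Finset.mem_univ e))
  rw [if_pos (Finset.union_sdiff_right x e.1)]
  refine mul_le_mul_of_nonneg_left ?_ (hp x e)
  have hcard : e.1.card = e.1.attach.card := Finset.card_attach.symm
  rw [hcard, ← Finset.prod_const]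
  refine Finset.prod_le_prod (fun g _ => mul_nonneg hu hν) fun g _ => ?_
  have hg : decide (g.1 ∈ x ∪ e.1) = true := by
    simp [Finset.mem_union, g.2]
  rw [hg]
  exact siteProb_true_ge u ν hu1 hν _

/-- accumulated replaced set of a list of replacement events -/
def accR (L : List (RepEvent G)) : Finset G := L.foldr (fun e s => e.1 ∪ s) ∅

lemma mem_accR {L : List (RepEvent G)} {h : G} :
    h ∈ accR L ↔ ∃ e ∈ L, h ∈ e.1 := by
  induction L with
  | nil => simp [accR]
  | cons e L ih =>
    show h ∈ e.1 ∪ accR L ↔ _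
    simp [Finset.mem_union, ih]

lemma reach (hp : ∀ x e, 0 ≤ p x e) (hp0 : ∀ x e, p x e = p ∅ e)
    (hu : 0 ≤ u) (hu1 : u ≤ 1) (hν : 0 ≤ ν) (hν1 : ν ≤ 1) :
    ∀ (L : List (RepEvent G)) (x : PopState G),
      (L.map fun e => p ∅ e * (u * ν) ^ e.1.card).prod ≤
        iterKer (step p u ν) L.length x (x ∪ accR L) := by
  intro L
  induction L with
  | nil =>
    intro x
    simp [accR, iterKer]
  | cons e L ih =>
    intro x
    have hrest : 0 ≤ (L.map fun e => p ∅ e * (u * ν) ^ e.1.card).prod := by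
      refine List.prod_nonneg fun a ha => ?_
      obtain ⟨e', _, rfl⟩ := List.mem_map.mp ha
      exact mul_nonneg (hp ∅ e') (pow_nonneg (mul_nonneg hu hν) _)
    have hx : x ∪ accR (e :: L) = (x ∪ e.1) ∪ accR L := by
      show x ∪ (e.1 ∪ accR L) = _
      rw [Finset.union_assoc]
    rw [List.length_cons, iterKer_succ_left, hx, List.map_cons, List.prod_cons]
    have h1 : p ∅ e * (u * ν) ^ e.1.card * (L.map fun e => p ∅ e * (u * ν) ^ e.1.card).prod ≤
        step p u ν x (x ∪ e.1) *
          iterKer (step p u ν) L.length (x ∪ e.1) ((x ∪ e.1) ∪ accR L) := by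
      refine mul_le_mul ?_ (ih (x ∪ e.1)) hrest
        (step_nonneg u ν hp hu hu1 hν hν1 _ _)
      calc p ∅ e * (u * ν) ^ e.1.card = p x e * (u * ν) ^ e.1.card := by rw [hp0 x e]
        _ ≤ _ := step_lower hp hu hu1 hν hν1 x e
    refine le_trans h1 (Finset.single_le_sum
      (f := fun z => step p u ν x z * iterKer (step p u ν) L.length z ((x ∪ e.1) ∪ accR L))
      (fun z _ => ?_) (Finset.mem_univ (x ∪ e.1)))
    exact mul_nonneg (step_nonneg u ν hp hu hu1 hν hν1 _ _)
      (iterKer_nonneg (step_nonneg u ν hp hu hu1 hν hν1) _ _ _)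

end Aux2

section Aux3

variable {G : Type} [Fintype G] [DecidableEq G]

lemma comp_fix {h : G} : ∀ L : List (RepEvent G), (∀ e ∈ L, h ∉ e.1) →
    (L.map tildeMap).foldr (· ∘ ·) id h = h := by
  intro L
  induction L with
  | nil => intro _; rfl
  | cons e L ih =>
    intro hL
    rw [List.map_cons, List.foldr_cons, Function.comp_apply,
      ih (fun e' he' => hL e' (List.mem_cons_of_mem _ he'))]
    exact dif_neg (hL e List.mem_cons_self)

end Aux3

/-- Proposition 3 of Allen & McAvoy: under neutral drift,
for fixed `u > 0`, the stationary probability of state `x` under mutational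
bias `ν` equals the stationary probability of the complement state `x̄` under
mutational bias `1 − ν`. -/
theorem statement10
    {G : Type} [Fintype G] [DecidableEq G] [Nonempty G]
    (p : PopState G → RepEvent G → ℝ) (hrule : IsRule p) (hfix : FixationAxiom p)
    (hneut : NeutralDrift p)
    (u ν : ℝ) (hu : 0 < u) (hu1 : u ≤ 1) (hν : 0 < ν) (hν1 : ν < 1)
    -- `π₁` is the stationary distribution for mutational bias `ν`:
    (π₁ : PopState G → ℝ) (hπ₁pos : ∀ x, 0 ≤ π₁ x)
    (hπ₁sum : ∑ x : PopState G, π₁ x = 1)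
    (hπ₁stat : ∀ y, π₁ y = ∑ x : PopState G, π₁ x * step p u ν x y)
    -- `π₂` is the stationary distribution for mutational bias `1 − ν`:
    (π₂ : PopState G → ℝ) (hπ₂pos : ∀ x, 0 ≤ π₂ x)
    (hπ₂sum : ∑ x : PopState G, π₂ x = 1)
    (hπ₂stat : ∀ y, π₂ y = ∑ x : PopState G, π₂ x * step p u (1 - ν) x y) :
    ∀ x : PopState G, π₁ x = π₂ xᶜ := by
  obtain ⟨hppos, hpsum⟩ := hrule
  obtain ⟨g, m, hm, ev, hev, ⟨k0, hk0⟩, hcomp⟩ := hfix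
  have hu0 : (0:ℝ) ≤ u := le_of_lt hu
  have hν0 : (0:ℝ) ≤ ν := le_of_lt hν
  have hν1' : ν ≤ 1 := le_of_lt hν1
  have hcomplBij : Function.Bijective (fun x : PopState G => xᶜ) :=
    Function.Involutive.bijective (fun x => compl_compl x)
  -- π₂' is stationary for the ν-chain
  set π₂' : PopState G → ℝ := fun x => π₂ xᶜ with hπ₂'def
  have hπ₂'sum : ∑ x : PopState G, π₂' x = 1 := by
    rw [← hπ₂sum]
    exact Fintype.sum_bijective _ hcomplBij _ _ (fun x => rfl)
  have hπ₂'stat : ∀ y, π₂' y = ∑ x : PopState G, π₂' x * step p u ν x y := by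
    intro y
    calc π₂' y = ∑ x : PopState G, π₂ x * step p u (1 - ν) x yᶜ := hπ₂stat yᶜ
      _ = ∑ x : PopState G, π₂ xᶜ * step p u (1 - ν) xᶜ yᶜ :=
          (Fintype.sum_bijective _ hcomplBij _ _ (fun x => rfl)).symm
      _ = ∑ x : PopState G, π₂' x * step p u ν x y := by
          refine Finset.sum_congr rfl fun x _ => ?_
          rw [step_compl u ν hneut x y]
  -- the signed measure σ
  set σ : PopState G → ℝ := fun y => π₁ y - π₂' y with hσdef
  have hσsum : ∑ y : PopState G, σ y = 0 := by
    simp only [hσdef, Finset.sum_sub_distrib, hπ₁sum, hπ₂'sum, sub_self]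
  have hσstat : ∀ y, σ y = ∑ x : PopState G, σ x * step p u ν x y := by
    intro y
    simp only [hσdef, sub_mul, Finset.sum_sub_distrib, ← hπ₁stat y, ← hπ₂'stat y]
  -- reaching the all-A state
  set L : List (RepEvent G) := List.ofFn ev with hLdef
  have hacc : accR L = Finset.univ := by
    ext h
    simp only [Finset.mem_univ, iff_true]
    rw [mem_accR]
    by_contra hcon
    push_neg at hcon
    have hfixh : h = g := by
      have h1 := hcomp h
      have h2 : (List.ofFn fun k => tildeMap (ev k)) = L.map tildeMap := by
        rw [hLdef, List.map_ofFn]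
        rfl
      rw [h2, comp_fix L hcon] at h1
      exact h1
    exact hcon (ev k0) (List.mem_ofFn.mpr ⟨k0, rfl⟩) (hfixh ▸ hk0)
  set δ : ℝ := (L.map fun e => p ∅ e * (u * ν) ^ e.1.card).prod with hδdef
  have hδpos : 0 < δ := by
    refine List.prod_pos fun a ha => ?_
    obtain ⟨e, he, rfl⟩ := List.mem_map.mp ha
    obtain ⟨k, rfl⟩ := List.mem_ofFn.mp he
    exact mul_pos (hev k ∅) (pow_pos (mul_pos hu hν) _)
  set K : PopState G → PopState G → ℝ := iterKer (step p u ν) m with hKdef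
  have hδle : ∀ x : PopState G, δ ≤ K x Finset.univ := by
    intro x
    have := reach hppos hneut hu0 hu1 hν0 hν1' L x
    rw [hacc, Finset.union_eq_right.mpr (Finset.subset_univ x), List.length_ofFn] at this
    exact this
  have hKnn : ∀ x y, 0 ≤ K x y :=
    iterKer_nonneg (step_nonneg u ν hppos hu0 hu1 hν0 hν1') m
  have hKrow : ∀ x, ∑ y : PopState G, K x y = 1 :=
    fun x => iterKer_row_sum (step_row_sum u ν hpsum) m x
  have hσK : ∀ y, σ y = ∑ x : PopState G, σ x * K x y :=
    fun y => iterKer_stationary hσstat m y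
  -- Doeblin contraction
  set Q : PopState G → PopState G → ℝ :=
    fun x y => K x y - if y = Finset.univ then δ else 0 with hQdef
  have hQnn : ∀ x y, 0 ≤ Q x y := by
    intro x y
    simp only [hQdef]
    split
    · next h => rw [h]; linarith [hδle x]
    · linarith [hKnn x y]
  have hQrow : ∀ x, ∑ y : PopState G, Q x y = 1 - δ := by
    intro x
    simp only [hQdef, Finset.sum_sub_distrib, hKrow x,
      Finset.sum_ite_eq' Finset.univ Finset.univ (fun _ => δ), Finset.mem_univ, if_true]
  have hσQ : ∀ y, σ y = ∑ x : PopState G, σ x * Q x y := by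
    intro y
    simp only [hQdef, mul_sub, Finset.sum_sub_distrib, ← hσK y, ← Finset.sum_mul, hσsum,
      zero_mul, sub_zero]
  have key : ∀ y, |σ y| ≤ ∑ x : PopState G, |σ x| * Q x y := by
    intro y
    rw [hσQ y]
    refine le_trans (Finset.abs_sum_le_sum_abs _ _) ?_
    refine Finset.sum_le_sum fun x _ => ?_
    rw [abs_mul, abs_of_nonneg (hQnn x y)]
  have total : ∑ y : PopState G, |σ y| ≤ (1 - δ) * ∑ x : PopState G, |σ x| := by
    calc ∑ y : PopState G, |σ y| ≤ ∑ y : PopState G, ∑ x : PopState G, |σ x| * Q x y :=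
          Finset.sum_le_sum fun y _ => key y
      _ = ∑ x : PopState G, |σ x| * ∑ y : PopState G, Q x y := by
          rw [Finset.sum_comm]
          exact Finset.sum_congr rfl fun x _ => (Finset.mul_sum _ _ _).symm
      _ = (1 - δ) * ∑ x : PopState G, |σ x| := by
          rw [Finset.mul_sum]
          exact Finset.sum_congr rfl fun x _ => by rw [hQrow x]; ring
  have hSnn : 0 ≤ ∑ y : PopState G, |σ y| :=
    Finset.sum_nonneg fun y _ => abs_nonneg _
  have hSzero : ∑ y : PopState G, |σ y| = 0 := by nlinarith
  intro x
  have hx : |σ x| = 0 := by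
    have := (Finset.sum_eq_zero_iff_of_nonneg (fun y _ => abs_nonneg (σ y))).mp hSzero
    exact this x (Finset.mem_univ x)
  have := abs_eq_zero.mp hx
  simpa [hσdef, sub_eq_zero] using this
end

section
/- Suppose the replacement rule satisfies Assumption 3 (coherence of individuals) and Assumption 4 (fair meiosis). If sites g, h ∈ G reside in the same individual (g ∼ h), then d_g(x) = d_h(x) and e_{gℓ}(x) = e_{hℓ}(x) for every state x ∈ {0,1}^G and every site ℓ ∈ G. If, in addition, Assumption 1 (consistency of monoallelic states) holds, then v_g = v_h and w_g(x) = w_h(x) for every state x. -/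
/-!
Common formal scaffold for "A mathematical formalism for natural selection
with arbitrary spatial and genetic structure" (Allen & McAvoy).

A population is a finite nonempty set `G` of genetic sites.  A state is a
subset of `G` (the set of sites occupied by allele `A`); `∅` is the
monoallelic state `a` and `Finset.univ` is the monoallelic state `A`.
A replacement event is a pair `(R, α)` with `R ⊆ G` and `α : R → G`.
-/

open Filter Topology Set

namespace NatSel

variable {G : Type} [Fintype G] [DecidableEq G]

/-- Assumption 3 (coherence of individuals): sites of the same individual are
replaced together.  Here `ind : G → I` assigns to each site its individual. -/
def Coherent {I : Type} (ind : G → I) (p : PopState G → RepEvent G → ℝ) : Prop :=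
  ∀ g h : G, ind g = ind h →
    ∀ (x : PopState G) (e : RepEvent G), 0 < p x e → (g ∈ e.1 ↔ h ∈ e.1)

/-- Assumption 4 (fair meiosis): two replacement events with the same replaced
set whose parentage maps agree at the level of individuals are equally likely. -/
def FairMeiosis {I : Type} (ind : G → I) (p : PopState G → RepEvent G → ℝ) : Prop :=
  ∀ e₁ e₂ : RepEvent G, ∀ heq : e₁.1 = e₂.1,
    (∀ g : ↥e₁.1, ind (e₁.2 g) = ind (e₂.2 ⟨g.1, heq ▸ g.2⟩)) →
    ∀ x : PopState G, p x e₁ = p x e₂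

lemma dProb_eq_sum (p : PopState G → RepEvent G → ℝ) (g : G) (x : PopState G) :
    dProb p g x = ∑ e : RepEvent G, if g ∈ e.1 then p x e else 0 := by
  unfold dProb eMarg
  rw [Finset.sum_comm]
  refine Finset.sum_congr rfl fun e _ => ?_
  by_cases hg : g ∈ e.1
  · simp [hg, Finset.sum_ite_eq]
  · simp [hg]

lemma foldr_fix {α : Type} (ℓ : α) :
    ∀ (l : List (α → α)), (∀ f ∈ l, f ℓ = ℓ) → l.foldr (· ∘ ·) id ℓ = ℓ
  | [], _ => rfl
  | f :: t, h => by
    simp only [List.foldr_cons, Function.comp_apply]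
    rw [foldr_fix ℓ t (fun f hf => h f (List.mem_cons_of_mem _ hf)),
      h f List.mem_cons_self]

lemma dProb_pos (p : PopState G → RepEvent G → ℝ) (hrule : IsRule p)
    (hfix : FixationAxiom p) (ℓ : G) (x : PopState G) : 0 < dProb p ℓ x := by
  obtain ⟨g0, m, hm, ev, hpos, ⟨k0, hk0⟩, hcomp⟩ := hfix
  have hmem : ∃ k, ℓ ∈ (ev k).1 := by
    by_cases hℓ : ℓ = g0
    · exact ⟨k0, hℓ ▸ hk0⟩
    by_contra hno
    push_neg at hno
    have hfl : ∀ f ∈ List.ofFn (fun k => tildeMap (ev k)), f ℓ = ℓ := by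
      intro f hf
      rw [List.mem_ofFn] at hf
      obtain ⟨k, rfl⟩ := hf
      unfold tildeMap
      simp [hno k]
    exact hℓ ((foldr_fix ℓ _ hfl) ▸ hcomp ℓ)
  obtain ⟨k, hk⟩ := hmem
  rw [dProb_eq_sum]
  have h1 : (if ℓ ∈ (ev k).1 then p x (ev k) else 0) ≤
      ∑ e : RepEvent G, if ℓ ∈ e.1 then p x e else 0 := by
    refine Finset.single_le_sum (f := fun e : RepEvent G => if ℓ ∈ e.1 then p x e else 0)
      (fun e _ => ?_) (Finset.mem_univ (ev k))
    by_cases h : ℓ ∈ e.1 <;> simp [h, hrule.1 x e]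
  rw [if_pos hk] at h1
  exact lt_of_lt_of_le (hpos k x) h1

lemma eMarg_congr {I : Type} (ind : G → I) (p : PopState G → RepEvent G → ℝ)
    (hfair : FairMeiosis ind p) {g h : G} (hgh : ind g = ind h)
    (ℓ : G) (x : PopState G) : eMarg p g ℓ x = eMarg p h ℓ x := by
  unfold eMarg
  set σ := Equiv.swap g h with hσ
  have hind : ∀ a : G, ind (σ a) = ind a := by
    intro a
    rcases eq_or_ne a g with h1 | h1
    · simp [hσ, h1, Equiv.swap_apply_left, hgh]
    rcases eq_or_ne a h with h2 | h2
    · simp [hσ, h2, Equiv.swap_apply_right, hgh]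
    · simp [hσ, Equiv.swap_apply_of_ne_of_ne h1 h2]
  have hF : ∀ e : RepEvent G, p x (⟨e.1, fun k => σ (e.2 k)⟩ : RepEvent G) = p x e := by
    intro e
    exact hfair ⟨e.1, fun k => σ (e.2 k)⟩ e rfl (fun k => hind (e.2 k)) x
  set F : RepEvent G → RepEvent G := fun e => ⟨e.1, fun k => σ (e.2 k)⟩ with hFdef
  have hinv : ∀ e : RepEvent G, F (F e) = e := by
    rintro ⟨R, α⟩
    simp [hFdef, hσ, Equiv.swap_apply_self]
  refine Fintype.sum_equiv ⟨F, F, hinv, hinv⟩ _ _ fun e => ?_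
  simp only [Equiv.coe_fn_mk]
  by_cases hℓ : ℓ ∈ e.1
  · rw [dif_pos hℓ, dif_pos hℓ]
    have : σ (e.2 ⟨ℓ, hℓ⟩) = h ↔ e.2 ⟨ℓ, hℓ⟩ = g := by
      rw [Equiv.apply_eq_iff_eq_symm_apply]
      simp [hσ]
    by_cases hc : e.2 ⟨ℓ, hℓ⟩ = g
    · rw [if_pos hc, if_pos (this.mpr hc), hF e]
    · rw [if_neg hc, if_neg (fun hh => hc (this.mp hh))]
  · rw [dif_neg hℓ, dif_neg hℓ]

/-- Lemma 3 of Allen & McAvoy: under Assumptions 3 and 4,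
sites residing in the same individual have the same death probabilities and
the same marginal offspring probabilities in every state; if moreover
Assumption 1 holds, they have the same reproductive value and fitness. -/
theorem statement14
    {G : Type} [Fintype G] [DecidableEq G] [Nonempty G]
    {I : Type} (ind : G → I)
    (p : PopState G → RepEvent G → ℝ) (hrule : IsRule p) (hfix : FixationAxiom p)
    (hcoh : Coherent ind p) (hfair : FairMeiosis ind p) :
    (∀ g h : G, ind g = ind h →
      (∀ x : PopState G, dProb p g x = dProb p h x) ∧
      (∀ (x : PopState G) (ℓ : G), eMarg p g ℓ x = eMarg p h ℓ x)) ∧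
    (ConsistentMono p →
      ∀ v : G → ℝ, IsRepVal p v →
        ∀ g h : G, ind g = ind h →
          v g = v h ∧ ∀ x : PopState G, fitness p v g x = fitness p v h x) := by
  have hd : ∀ g h : G, ind g = ind h → ∀ x : PopState G,
      dProb p g x = dProb p h x := by
    intro g h hgh x
    rw [dProb_eq_sum, dProb_eq_sum]
    refine Finset.sum_congr rfl fun e _ => ?_
    rcases lt_or_eq_of_le (hrule.1 x e) with hp | hp
    · have hiff := hcoh g h hgh x e hp
      by_cases hg : g ∈ e.1
      · rw [if_pos hg, if_pos (hiff.mp hg)]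
      · rw [if_neg hg, if_neg (fun hh => hg (hiff.mpr hh))]
    · rw [← hp]; simp
  have he : ∀ g h : G, ind g = ind h → ∀ (x : PopState G) (ℓ : G),
      eMarg p g ℓ x = eMarg p h ℓ x :=
    fun g h hgh x ℓ => eMarg_congr ind p hfair hgh ℓ x
  refine ⟨fun g h hgh => ⟨hd g h hgh, he g h hgh⟩, ?_⟩
  intro _hmono v hv g h hgh
  have hdpos : 0 < dProb p g (∅ : PopState G) := dProb_pos p hrule hfix g ∅
  have hvgh : v g = v h := by
    have h1 : dProb p g ∅ * v g = dProb p g ∅ * v h := by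
      rw [hv.1 g, hd g h hgh ∅]
      rw [hv.1 h]
      exact Finset.sum_congr rfl fun ℓ _ => by rw [he g h hgh ∅ ℓ]
    exact mul_left_cancel₀ (ne_of_gt hdpos) h1
  refine ⟨hvgh, fun x => ?_⟩
  unfold fitness dHat bHat
  rw [hvgh, hd g h hgh x]
  congr 1
  exact Finset.sum_congr rfl fun ℓ _ => by rw [he g h hgh x ℓ]

end NatSel
end

section
/- Let G be the vertex set of a connected weighted (undirected) graph with nonnegative edge weights ω_{gh} = ω_{hg}, weighted degrees ω_g = Σ_h ω_{gh} > 0, total weighted degree Ω = Σ_h ω_h, and total inverse weighted degree Ω̃ = Σ_h ω_h^{-1}, with n = |G|. Let random-walk step probabilities be p_{gh} = ω_{gh}/ω_g. For neutral Birth-Death updating, where e°_{gh} = p_{gh}/n, the unique solution of the reproductive-value equations d°_g v_g = Σ_h e°_{gh} v_h (with d°_g = Σ_h e°_{hg}) and Σ_g v_g = n is v_g = n ω_g^{-1}/Ω̃. For neutral Death-Birth updating, where e°_{gh} = p_{hg}/n, the unique solution is v_g = n ω_g/Ω. -/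
/-!
Common formal scaffold for "A mathematical formalism for natural selection
with arbitrary spatial and genetic structure" (Allen & McAvoy).

A population is a finite nonempty set `G` of genetic sites.  A state is a
subset of `G` (the set of sites occupied by allele `A`); `∅` is the
monoallelic state `a` and `Finset.univ` is the monoallelic state `A`.
A replacement event is a pair `(R, α)` with `R ⊆ G` and `α : R → G`.
-/

open Filter Topology Set

namespace NatSel

variable {G : Type} [Fintype G] [DecidableEq G]

/-- Weighted degree `ω_g = Σ_h ω_{gh}` of a vertex. -/
def wdeg (ω : G → G → ℝ) (g : G) : ℝ := ∑ h, ω g h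

/-- Neutral marginal replacement kernel for Birth-Death updating:
`e°_{gh} = p_{gh}/n` with `p_{gh} = ω_{gh}/ω_g`. -/
noncomputable def eBD (ω : G → G → ℝ) (g h : G) : ℝ :=
  ω g h / wdeg ω g / (Fintype.card G : ℝ)

/-- Neutral marginal replacement kernel for Death-Birth updating:
`e°_{gh} = p_{hg}/n`. -/
noncomputable def eDB (ω : G → G → ℝ) (g h : G) : ℝ :=
  ω h g / wdeg ω h / (Fintype.card G : ℝ)

/-- `d°_g = Σ_h e°_{hg}` for a marginal kernel `e`. -/
def dKer (e : G → G → ℝ) (g : G) : ℝ := ∑ h, e h g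

/-- `v` solves the reproductive-value equations for the marginal kernel `e`. -/
def IsRVKer (e : G → G → ℝ) (v : G → ℝ) : Prop :=
  (∀ g, dKer e g * v g = ∑ h, e g h * v h) ∧ ∑ g, v g = (Fintype.card G : ℝ)

/-- Maximum principle: a "balanced" function on a connected graph is constant. -/
lemma balance_const {G : Type} [Fintype G] [DecidableEq G] [Nonempty G]
    (r : G → G → Prop) (c : G → G → ℝ)
    (hc : ∀ g h, 0 ≤ c g h) (hr : ∀ a b, r a b → 0 < c a b)
    (hconn : ∀ g h : G, Relation.ReflTransGen r g h)
    (u : G → ℝ) (hbal : ∀ g, ∑ h, c g h * (u g - u h) = 0) :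
    ∀ g h, u g = u h := by
  obtain ⟨g₀, -, hg₀⟩ := Finset.exists_max_image Finset.univ u ⟨Classical.arbitrary G,
    Finset.mem_univ _⟩
  suffices H : ∀ g, u g = u g₀ by intro g h; rw [H g, H h]
  have step : ∀ a b, u a = u g₀ → r a b → u b = u g₀ := by
    intro a b ha hab
    have hmax : ∀ h, u h ≤ u a := fun h => ha ▸ hg₀ h (Finset.mem_univ h)
    have hterms : ∀ h ∈ Finset.univ, 0 ≤ c a h * (u a - u h) := fun h _ =>
      mul_nonneg (hc a h) (by linarith [hmax h])
    have hz := (Finset.sum_eq_zero_iff_of_nonneg hterms).mp (hbal a) b (Finset.mem_univ b)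
    have hcab := hr a b hab
    have : u a - u b = 0 := by
      rcases mul_eq_zero.mp hz with h | h
      · exact absurd h (ne_of_gt hcab)
      · exact h
    linarith [ha]
  intro g
  induction hconn g₀ g with
  | refl => rfl
  | tail _ hab ih => exact step _ _ ih hab

/-- reproductive values on weighted graphs, Allen & McAvoy
§7.1: on a connected weighted graph, for neutral Birth-Death updating the
unique solution of the reproductive-value equations is
`v_g = n ω_g⁻¹ / Ω̃`, and for neutral Death-Birth updating it is
`v_g = n ω_g / Ω`. -/
theorem statement16
    {G : Type} [Fintype G] [DecidableEq G] [Nonempty G]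
    (ω : G → G → ℝ)
    (hsymm : ∀ g h, ω g h = ω h g)
    (hnonneg : ∀ g h, 0 ≤ ω g h)
    (hdeg : ∀ g, 0 < wdeg ω g)
    (hconn : ∀ g h : G, Relation.ReflTransGen (fun a b => 0 < ω a b) g h) :
    (∀ v : G → ℝ, IsRVKer (eBD ω) v ↔
      ∀ g, v g = (Fintype.card G : ℝ) * (wdeg ω g)⁻¹ / (∑ h, (wdeg ω h)⁻¹)) ∧
    (∀ v : G → ℝ, IsRVKer (eDB ω) v ↔
      ∀ g, v g = (Fintype.card G : ℝ) * wdeg ω g / (∑ h, wdeg ω h)) := by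
  set n : ℝ := (Fintype.card G : ℝ) with hn_def
  have hn : 0 < n := by
    simp only [hn_def]
    exact_mod_cast Fintype.card_pos
  have hnne : n ≠ 0 := ne_of_gt hn
  have hωne : ∀ g, wdeg ω g ≠ 0 := fun g => ne_of_gt (hdeg g)
  have hS : 0 < ∑ h, (wdeg ω h)⁻¹ :=
    Finset.sum_pos (fun h _ => inv_pos.mpr (hdeg h)) Finset.univ_nonempty
  have hSne : (∑ h, (wdeg ω h)⁻¹) ≠ 0 := ne_of_gt hS
  have hΩ : 0 < ∑ h, wdeg ω h :=
    Finset.sum_pos (fun h _ => hdeg h) Finset.univ_nonempty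
  have hΩne : (∑ h, wdeg ω h) ≠ 0 := ne_of_gt hΩ
  constructor
  · -- Birth-Death
    intro v
    constructor
    · rintro ⟨h1, h2⟩
      have key : ∀ g, ∑ h, (ω g h / wdeg ω h) *
          ((fun g => v g * wdeg ω g) g - (fun g => v g * wdeg ω g) h) = 0 := by
        intro g
        have A : (n * wdeg ω g) * (dKer (eBD ω) g * v g)
            = ∑ h, (ω g h / wdeg ω h) * (v g * wdeg ω g) := by
          rw [dKer, Finset.sum_mul, Finset.mul_sum]
          refine Finset.sum_congr rfl fun h _ => ?_
          rw [eBD, hsymm h g]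
          field_simp [hnne, hωne h]
          ring
        have B : (n * wdeg ω g) * (∑ h, eBD ω g h * v h)
            = ∑ h, (ω g h / wdeg ω h) * (v h * wdeg ω h) := by
          rw [Finset.mul_sum]
          refine Finset.sum_congr rfl fun h _ => ?_
          rw [eBD]
          field_simp [hnne, hωne g, hωne h]
          ring
        simp only [mul_sub, Finset.sum_sub_distrib, ← A, ← B, h1 g, sub_self]
      have const := balance_const (fun a b => 0 < ω a b)
        (fun g h => ω g h / wdeg ω h)
        (fun g h => div_nonneg (hnonneg g h) (le_of_lt (hdeg h)))
        (fun a b hab => div_pos hab (hdeg b)) hconn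
        (fun g => v g * wdeg ω g) key
      intro g
      have hsum : ∑ h, v h = (v g * wdeg ω g) * ∑ h, (wdeg ω h)⁻¹ := by
        rw [Finset.mul_sum]
        refine Finset.sum_congr rfl fun h _ => ?_
        have hc : v g * wdeg ω g = v h * wdeg ω h := const g h
        rw [hc, mul_assoc, mul_inv_cancel₀ (hωne h), mul_one]
      have hval : v g * wdeg ω g = n / ∑ h, (wdeg ω h)⁻¹ := by
        rw [eq_div_iff hSne, ← hsum, h2]
      have hvg : v g = n / (∑ h, (wdeg ω h)⁻¹) / wdeg ω g := by
        rw [← hval, mul_div_cancel_right₀ _ (hωne g)]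
      rw [hvg, div_div, mul_comm (∑ h, (wdeg ω h)⁻¹) (wdeg ω g), ← div_div,
        div_eq_mul_inv n (wdeg ω g)]
    · intro hv
      constructor
      · intro g
        simp only [hv]
        rw [dKer, Finset.sum_mul]
        refine Finset.sum_congr rfl fun h _ => ?_
        rw [eBD, eBD, hsymm h g]
        field_simp [hnne, hSne, hωne g, hωne h]
      · simp only [hv]
        rw [← Finset.sum_div, ← Finset.mul_sum, mul_div_assoc, div_self hSne, mul_one]
  · -- Death-Birth
    intro v
    constructor
    · rintro ⟨h1, h2⟩
      have key : ∀ g, ∑ h, ω g h *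
          ((fun g => v g / wdeg ω g) g - (fun g => v g / wdeg ω g) h) = 0 := by
        intro g
        have A : n * (dKer (eDB ω) g * v g)
            = ∑ h, ω g h * (v g / wdeg ω g) := by
          rw [dKer, Finset.sum_mul, Finset.mul_sum]
          refine Finset.sum_congr rfl fun h _ => ?_
          rw [eDB]
          field_simp [hnne, hωne g]
          ring
        have B : n * (∑ h, eDB ω g h * v h)
            = ∑ h, ω g h * (v h / wdeg ω h) := by
          rw [Finset.mul_sum]
          refine Finset.sum_congr rfl fun h _ => ?_
          rw [eDB, hsymm g h]
          field_simp [hnne, hωne g, hωne h]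
          ring
        simp only [mul_sub, Finset.sum_sub_distrib, ← A, ← B, h1 g, sub_self]
      have const := balance_const (fun a b => 0 < ω a b) ω hnonneg
        (fun a b hab => hab) hconn (fun g => v g / wdeg ω g) key
      intro g
      have hsum : ∑ h, v h = (v g / wdeg ω g) * ∑ h, wdeg ω h := by
        rw [Finset.mul_sum]
        refine Finset.sum_congr rfl fun h _ => ?_
        have hc : v g / wdeg ω g = v h / wdeg ω h := const g h
        rw [hc, div_mul_cancel₀ _ (hωne h)]
      have hval : v g / wdeg ω g = n / ∑ h, wdeg ω h := by
        rw [eq_div_iff hΩne, ← hsum, h2]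
      have hvg : v g = n / (∑ h, wdeg ω h) * wdeg ω g := by
        rw [← hval, div_mul_cancel₀ _ (hωne g)]
      rw [hvg, div_mul_eq_mul_div]
    · intro hv
      constructor
      · intro g
        simp only [hv]
        rw [dKer, Finset.sum_mul]
        refine Finset.sum_congr rfl fun h _ => ?_
        rw [eDB, eDB, hsymm h g]
        field_simp [hnne, hΩne, hωne g, hωne h]
      · simp only [hv]
        rw [← Finset.sum_div, ← Finset.mul_sum, mul_div_assoc, div_self hΩne, mul_one]

end NatSel
end
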